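/- In a 4-dimensional perfect fluid spacetime with constant scalar curvature R in f(R)-gravity, tracing the field equation yields −R = κ²(3p − σ)/f_R(R) + 2(f(R) − R f_R(R))/f_R(R), and consequently in the dark matter era (p + σ = 0) the Ricci tensor is proportional to the metric: S = ((2κ²p + f(R))/(2 f_R(R))) g, i.e., the spacetime is Einstein. -/
import Mathlib


/-- In a 4-dimensional perfect fluid spacetime with constant scalar
curvature `R` in f(R)-gravity, tracing the field equation yields
`−R = κ²(3p − σ)/f_R(R) + 2(f(R) − R f_R(R))/f_R(R)`, and consequently in the dark
matter era (`p + σ = 0`) the Ricci tensor is proportional to the metric: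
`S = ((2κ²p + f(R))/(2 f_R(R))) g`, i.e. the spacetime is Einstein. -/
theorem dark_matter_era_einstein
    {V : Type*} [AddCommGroup V] [Module ℝ V]
    (g S T : V → V → ℝ) (ρ : V) (B : V → ℝ) (κ f fR p σ R : ℝ)
    (tr : (V → V → ℝ) →ₗ[ℝ] ℝ)
    (hB : ∀ X, B X = g X ρ)
    (hρ : g ρ ρ = -1)
    (hfR : fR ≠ 0)
    (hT : T = fun X Y => (σ + p) * (B X * B Y) + p * g X Y)
    (hfield : ∀ X Y, S X Y - R / 2 * g X Y
        = κ ^ 2 / fR * T X Y + (f - R * fR) / (2 * fR) * g X Y)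
    (htrg : tr g = 4)
    (htrBB : tr (fun X Y => B X * B Y) = -1)
    (htrS : tr S = R) :
    (-R = κ ^ 2 * (3 * p - σ) / fR + 2 * (f - R * fR) / fR)
      ∧ (p + σ = 0 → ∀ X Y, S X Y = (2 * κ ^ 2 * p + f) / (2 * fR) * g X Y) := by
  set a : ℝ := R / 2 + κ ^ 2 * p / fR + (f - R * fR) / (2 * fR) with ha
  set b : ℝ := κ ^ 2 * (σ + p) / fR with hb
  have hS : S = a • g + b • (fun X Y => B X * B Y) := by
    funext X Y
    have h := hfield X Y
    rw [hT] at h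
    have : S X Y = a * g X Y + b * (B X * B Y) := by rw [ha, hb]; field_simp at h ⊢; ring_nf at h ⊢; linarith
    simpa [Pi.add_apply, Pi.smul_apply, smul_eq_mul] using this
  have htr : R = a * 4 + b * (-1) := by
    rw [← htrS, hS, map_add, map_smul, map_smul, htrg, htrBB]; simp [smul_eq_mul]
  constructor
  · rw [ha, hb] at htr
    linear_combination htr
  · intro hps X Y
    have hb0 : b = 0 := by rw [hb, show σ + p = 0 by linarith]; simp
    have hxy : S X Y = a * g X Y := by
      rw [hS, hb0]
      simp
    have haeq : a = (2 * κ ^ 2 * p + f) / (2 * fR) := by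
      rw [ha]; field_simp; ring
    rw [hxy, haeq]
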